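/- arXiv:2406.02512 — 2 statements merged into one kernel-verified Lean document; each statement's English description precedes it below -/
import Mathlib

section
/- With the notation of the combinatorial tree for the cubic derivative NLS (branch sets Γ^{(k)}, counting function ℓ, denominators 𝔇, and multi-index sets ℜ^{(k,γ)}), if 0 < T ≤ 4/81, then for all k ≥ 1, M_k := ∑_{γ ∈ Γ^{(k)}} (T^{ℓ(γ)}/𝔇(γ)) ∑_{α ∈ ℜ^{(k,γ)}} ∏_j α_j! ≤ 3/2. -/
inductive BranchTree : Type
  | zero : BranchTree
  | one : BranchTree
  | node : BranchTree → BranchTree → BranchTree → BranchTree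
  deriving DecidableEq

def sigma2 : BranchTree → ℕ
  | .zero => 1
  | .one => 3
  | .node a b c => sigma2 a + sigma2 b + sigma2 c

def ellB : BranchTree → ℕ
  | .zero => 0
  | .one => 1
  | .node a b c => 1 + ellB a + ellB b + ellB c

/-- The denominators 𝔇: 𝔇(0) = 𝔇(1) = 1, 𝔇((γ₁,γ₂,γ₃)) = ℓ((γ₁,γ₂,γ₃))·∏ 𝔇(γⱼ). -/
def Dfun : BranchTree → ℕ
  | .zero => 1
  | .one => 1
  | .node a b c => ellB (.node a b c) * (Dfun a * Dfun b * Dfun c)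

def Gamma : ℕ → Finset BranchTree
  | 0 => ∅
  | 1 => {BranchTree.zero, BranchTree.one}
  | (n + 2) => insert BranchTree.zero
      (((Gamma (n + 1)) ×ˢ (Gamma (n + 1)) ×ˢ (Gamma (n + 1))).image
        fun p => BranchTree.node p.1 p.2.1 p.2.2)

def unitIdx (n : ℕ) : Multiset (List ℕ) :=
  (Multiset.range n).map fun j => (List.range n).map fun i => if i = j then 1 else 0

def Rset : BranchTree → Multiset (List ℕ)
  | .zero => {[0]}
  | .one => {[1, 0, 0], [0, 1, 0], [0, 0, 1]}
  | .node a b c =>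
      (Rset a).bind fun x => (Rset b).bind fun y => (Rset c).bind fun z =>
        (unitIdx (sigma2 (.node a b c))).map fun e =>
          List.zipWith (· + ·) (x ++ y ++ z) e

def Pfun (γ : BranchTree) : ℕ :=
  ((Rset γ).map fun α => (α.map Nat.factorial).prod).sum

lemma zipWith_add_replicate_zero (α : List ℕ) :
    List.zipWith (· + ·) α (List.replicate α.length 0) = α := by
  induction α with
  | nil => rfl
  | cons a t ih => simp [List.replicate_succ, ih]

lemma sum_zipWith_add (l1 l2 : List ℕ) (h : l1.length = l2.length) :
    (List.zipWith (· + ·) l1 l2).sum = l1.sum + l2.sum := by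
  induction l1 generalizing l2 with
  | nil => cases l2 with
    | nil => simp
    | cons b t => simp at h
  | cons a t ih =>
    cases l2 with
    | nil => simp at h
    | cons b s =>
      simp at h
      simp [List.zipWith, ih s h]
      ring

lemma sum_unit_vec (n j : ℕ) (hj : j < n) :
    (((List.range n).map fun i => if i = j then 1 else 0).sum) = 1 := by
  induction n with
  | zero => omega
  | succ n ih =>
    rcases Nat.lt_or_ge j n with h | h
    · rw [List.range_succ]; simp [ih h]; omega
    · rw [show j = n from by omega, List.range_succ, List.map_append, List.sum_append]
      have h0 : ((List.range n).map fun i => if i = n then 1 else 0).sum = 0 := by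
        apply List.sum_eq_zero
        intro x hx
        simp only [List.mem_map, List.mem_range] at hx
        obtain ⟨i, hi, rfl⟩ := hx
        simp [Nat.ne_of_lt hi]
      simp [h0]

lemma list_sum_map_mul (l : List ℕ) (c : ℕ) (f : ℕ → ℕ) :
    (l.map fun x => c * f x).sum = c * (l.map f).sum := by
  induction l with
  | nil => simp
  | cons a t ih => simp [ih, Nat.mul_add]

lemma key_sum (α : List ℕ) :
    (((List.range α.length).map fun j =>
        ((List.zipWith (· + ·) α
          ((List.range α.length).map fun i => if i = j then 1 else 0)).map
            Nat.factorial).prod).sum)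
      = (α.length + α.sum) * (α.map Nat.factorial).prod := by
  induction α with
  | nil => simp
  | cons a t ih =>
    have huv : ∀ j, (List.range (t.length + 1)).map (fun i => if i = j then 1 else 0)
        = (if 0 = j then 1 else 0) ::
          (List.range t.length).map (fun i => if i + 1 = j then 1 else 0) := by
      intro j
      rw [List.range_succ_eq_map, List.map_cons, List.map_map]
      rfl
    have hz : (List.range t.length).map (fun i => if i + 1 = 0 then 1 else 0)
        = List.replicate t.length 0 := by
      simp
    have hn : (a :: t).length = t.length + 1 := rfl
    rw [hn, List.range_succ_eq_map, List.map_cons, List.map_map, List.sum_cons,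
      ← List.range_succ_eq_map]
    have hhead : ((List.zipWith (· + ·) (a :: t)
        ((List.range (t.length + 1)).map fun i => if i = 0 then 1 else 0)).map
          Nat.factorial).prod = (a + 1).factorial * (t.map Nat.factorial).prod := by
      rw [huv 0]
      simp only [if_pos rfl, hz, List.zipWith_cons_cons, zipWith_add_replicate_zero]
      simp
    have htail : ∀ j, ((fun j =>
        ((List.zipWith (· + ·) (a :: t)
          ((List.range (t.length + 1)).map fun i => if i = j then 1 else 0)).map
            Nat.factorial).prod) ∘ Nat.succ) j
        = a.factorial * ((List.zipWith (· + ·) t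
            ((List.range t.length).map fun i => if i = j then 1 else 0)).map
              Nat.factorial).prod := by
      intro j
      simp only [Function.comp]
      rw [huv (Nat.succ j)]
      have : (if 0 = Nat.succ j then 1 else 0) = 0 := by simp
      rw [this]
      have : (List.range t.length).map (fun i => if i + 1 = Nat.succ j then 1 else 0)
          = (List.range t.length).map (fun i => if i = j then 1 else 0) := by
        apply List.map_congr_left
        intro i _
        simp [Nat.succ_eq_add_one]
      rw [this]
      simp [List.zipWith_cons_cons]
    rw [hhead, List.map_congr_left fun j _ => htail j, list_sum_map_mul, ih]
    simp [Nat.factorial_succ]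
    ring

lemma sigma2_eq (γ : BranchTree) : sigma2 γ = 2 * ellB γ + 1 := by
  induction γ with
  | zero => rfl
  | one => rfl
  | node a b c iha ihb ihc => simp [sigma2, ellB, iha, ihb, ihc]; omega

lemma unitIdx_spec (n : ℕ) : ∀ e ∈ unitIdx n, e.length = n ∧ e.sum = 1 := by
  intro e he
  simp only [unitIdx, Multiset.mem_map, Multiset.mem_range] at he
  obtain ⟨j, hj, rfl⟩ := he
  exact ⟨by simp, sum_unit_vec n j hj⟩

lemma Rset_spec (γ : BranchTree) : ∀ α ∈ Rset γ, α.length = sigma2 γ ∧ α.sum = ellB γ := by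
  induction γ with
  | zero => intro α hα; simp [Rset] at hα; subst hα; constructor <;> rfl
  | one =>
    intro α hα
    simp only [Rset, Multiset.insert_eq_cons, Multiset.mem_cons, Multiset.mem_singleton] at hα
    rcases hα with rfl | rfl | rfl <;> constructor <;> rfl
  | node a b c iha ihb ihc =>
    intro α hα
    simp only [Rset, Multiset.mem_bind, Multiset.mem_map] at hα
    obtain ⟨x, hx, y, hy, z, hz, e, he, rfl⟩ := hα
    obtain ⟨hxl, hxs⟩ := iha x hx
    obtain ⟨hyl, hys⟩ := ihb y hy
    obtain ⟨hzl, hzs⟩ := ihc z hz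
    obtain ⟨hel, hes⟩ := unitIdx_spec _ e he
    have hlen : (x ++ y ++ z).length = sigma2 (.node a b c) := by
      simp [hxl, hyl, hzl, sigma2]; omega
    constructor
    · rw [List.length_zipWith, hlen, hel, min_self]
    · rw [sum_zipWith_add _ _ (by rw [hlen, hel]), hes]
      simp [hxs, hys, hzs, ellB]
      omega

lemma msum_mul (u : Multiset (List ℕ)) (b : ℕ) (h : List ℕ → ℕ) :
    (u.map fun z => b * h z).sum = b * (u.map h).sum := by
  induction u using Multiset.induction with
  | empty => simp
  | cons a u ih => simp [ih, Nat.mul_add]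

lemma triple_sum (s t u : Multiset (List ℕ)) (C : ℕ) (f g h : List ℕ → ℕ) :
    (s.map fun x => (t.map fun y => (u.map fun z => C * (f x * g y * h z)).sum).sum).sum
    = C * ((s.map f).sum * ((t.map g).sum * (u.map h).sum)) := by
  have e1 : (fun x => (t.map fun y => (u.map fun z => C * (f x * g y * h z)).sum).sum)
      = fun x => (C * ((t.map g).sum * (u.map h).sum)) * f x := by
    funext x
    rw [show (fun y => (u.map fun z => C * (f x * g y * h z)).sum)
        = fun y => (C * f x * (u.map h).sum) * g y from funext fun y => by
          rw [show (fun z => C * (f x * g y * h z)) = fun z => (C * f x * g y) * h z from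
            funext fun z => by ring, msum_mul]; ring, msum_mul]
    ring
  rw [e1, msum_mul]; ring

lemma Pfun_node (a b c : BranchTree) :
    Pfun (.node a b c) = 3 * ellB (.node a b c) * (Pfun a * Pfun b * Pfun c) := by
  have hinner : ∀ x ∈ Rset a, ∀ y ∈ Rset b, ∀ z ∈ Rset c,
      ((unitIdx (sigma2 (.node a b c))).map fun e =>
        ((List.zipWith (· + ·) (x ++ y ++ z) e).map Nat.factorial).prod).sum
      = (3 * ellB (.node a b c)) *
        ((x.map Nat.factorial).prod * (y.map Nat.factorial).prod * (z.map Nat.factorial).prod) := by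
    intro x hx y hy z hz
    obtain ⟨hxl, hxs⟩ := Rset_spec a x hx
    obtain ⟨hyl, hys⟩ := Rset_spec b y hy
    obtain ⟨hzl, hzs⟩ := Rset_spec c z hz
    have hlen : (x ++ y ++ z).length = sigma2 (.node a b c) := by
      simp [hxl, hyl, hzl, sigma2]; omega
    rw [unitIdx, Multiset.map_map, ← Multiset.coe_range, Multiset.map_coe, Multiset.sum_coe]
    have := key_sum (x ++ y ++ z)
    rw [hlen] at this
    simp only [Function.comp_def]
    rw [this]
    have harith : sigma2 (BranchTree.node a b c) + (x ++ y ++ z).sum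
        = 3 * ellB (BranchTree.node a b c) := by
      have h1 := sigma2_eq (BranchTree.node a b c)
      have h2 : (x ++ y ++ z).sum = ellB a + ellB b + ellB c := by
        simp [hxs, hys, hzs]; omega
      have h3 : ellB (BranchTree.node a b c) = 1 + ellB a + ellB b + ellB c := rfl
      omega
    rw [harith]
    congr 1
    simp [List.map_append, List.prod_append, mul_assoc]
  have h0 : Pfun (BranchTree.node a b c)
      = ((Rset a).map fun x => ((Rset b).map fun y => ((Rset c).map fun z =>
          ((unitIdx (sigma2 (BranchTree.node a b c))).map fun e =>
            ((List.zipWith (· + ·) (x ++ y ++ z) e).map Nat.factorial).prod).sum).sum).sum).sum := by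
    simp only [Pfun, Rset, Multiset.map_bind, Multiset.sum_bind, Multiset.map_map,
      Function.comp_def]
  have h1 : ((Rset a).map fun x => ((Rset b).map fun y => ((Rset c).map fun z =>
        ((unitIdx (sigma2 (BranchTree.node a b c))).map fun e =>
          ((List.zipWith (· + ·) (x ++ y ++ z) e).map Nat.factorial).prod).sum).sum).sum).sum
      = ((Rset a).map fun x => ((Rset b).map fun y => ((Rset c).map fun z =>
        (3 * ellB (BranchTree.node a b c)) * ((x.map Nat.factorial).prod *
          (y.map Nat.factorial).prod * (z.map Nat.factorial).prod)).sum).sum).sum := by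
    refine congrArg Multiset.sum (Multiset.map_congr rfl fun x hx => ?_)
    refine congrArg Multiset.sum (Multiset.map_congr rfl fun y hy => ?_)
    refine congrArg Multiset.sum (Multiset.map_congr rfl fun z hz => ?_)
    exact hinner x hx y hy z hz
  rw [h0, h1, triple_sum (Rset a) (Rset b) (Rset c) (3 * ellB (BranchTree.node a b c))
    (fun l => (l.map Nat.factorial).prod) (fun l => (l.map Nat.factorial).prod)
    (fun l => (l.map Nat.factorial).prod)]
  unfold Pfun
  ring

lemma Dfun_pos (γ : BranchTree) : 0 < Dfun γ := by
  induction γ with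
  | zero => exact Nat.one_pos
  | one => exact Nat.one_pos
  | node a b c iha ihb ihc =>
    have : 0 < ellB (BranchTree.node a b c) := by
      show 0 < 1 + ellB a + ellB b + ellB c; omega
    exact Nat.mul_pos this (Nat.mul_pos (Nat.mul_pos iha ihb) ihc)

lemma g_node (T : ℝ) (a b c : BranchTree) :
    T ^ ellB (BranchTree.node a b c) / (Dfun (BranchTree.node a b c) : ℝ) *
      (Pfun (BranchTree.node a b c) : ℝ)
    = 3 * T * (T ^ ellB a / (Dfun a : ℝ) * (Pfun a : ℝ))
        * (T ^ ellB b / (Dfun b : ℝ) * (Pfun b : ℝ))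
        * (T ^ ellB c / (Dfun c : ℝ) * (Pfun c : ℝ)) := by
  have hD : (Dfun (BranchTree.node a b c) : ℝ)
      = (ellB (BranchTree.node a b c) : ℝ) * ((Dfun a : ℝ) * (Dfun b : ℝ) * (Dfun c : ℝ)) := by
    rw [show Dfun (BranchTree.node a b c)
      = ellB (BranchTree.node a b c) * (Dfun a * Dfun b * Dfun c) from rfl]
    push_cast; ring
  have hP : (Pfun (BranchTree.node a b c) : ℝ)
      = 3 * (ellB (BranchTree.node a b c) : ℝ) * ((Pfun a : ℝ) * (Pfun b : ℝ) * (Pfun c : ℝ)) := by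
    rw [Pfun_node]; push_cast; ring
  have hl : T ^ ellB (BranchTree.node a b c) = T * (T ^ ellB a * T ^ ellB b * T ^ ellB c) := by
    rw [show ellB (BranchTree.node a b c) = 1 + ellB a + ellB b + ellB c from rfl]
    rw [pow_add, pow_add, pow_add, pow_one]; ring
  have hℓ : (0:ℝ) < (ellB (BranchTree.node a b c) : ℝ) := by
    have : 0 < ellB (BranchTree.node a b c) := by
      show 0 < 1 + ellB a + ellB b + ellB c; omega
    exact_mod_cast this
  have hDa : (0:ℝ) < (Dfun a : ℝ) := by exact_mod_cast Dfun_pos a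
  have hDb : (0:ℝ) < (Dfun b : ℝ) := by exact_mod_cast Dfun_pos b
  have hDc : (0:ℝ) < (Dfun c : ℝ) := by exact_mod_cast Dfun_pos c
  rw [hD, hP, hl]
  field_simp

lemma triple_sum_fin (G : Finset BranchTree) (C : ℝ) (g : BranchTree → ℝ) :
    (∑ x ∈ G, ∑ y ∈ G, ∑ z ∈ G, C * g x * g y * g z) = C * (∑ γ ∈ G, g γ) ^ 3 := by
  have h1 : ∀ x y, ∑ z ∈ G, C * g x * g y * g z = C * g x * g y * ∑ z ∈ G, g z := by
    intro x y; rw [← Finset.mul_sum]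
  simp_rw [h1]
  have h2 : ∀ x, ∑ y ∈ G, C * g x * g y * (∑ z ∈ G, g z)
      = C * g x * (∑ y ∈ G, g y) * (∑ z ∈ G, g z) := by
    intro x
    rw [← Finset.sum_mul, ← Finset.mul_sum]
  simp_rw [h2]
  rw [← Finset.sum_mul, ← Finset.sum_mul, ← Finset.mul_sum]
  ring

theorem M_k_le (T : ℝ) (hT0 : 0 < T) (hT : T ≤ 4 / 81) (k : ℕ) (hk : 1 ≤ k) :
    ∑ γ ∈ Gamma k, T ^ ellB γ / (Dfun γ : ℝ) * (Pfun γ : ℝ) ≤ 3 / 2 := by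
  obtain ⟨n, rfl⟩ : ∃ n, k = n + 1 := ⟨k - 1, by omega⟩
  clear hk
  induction n with
  | zero =>
    rw [show Gamma 1 = {BranchTree.zero, BranchTree.one} from rfl,
      Finset.sum_insert (by decide), Finset.sum_singleton]
    rw [show Pfun BranchTree.zero = 1 from rfl, show Pfun BranchTree.one = 3 from rfl]
    norm_num [ellB, Dfun]
    linarith
  | succ n ih =>
    set g : BranchTree → ℝ := fun γ => T ^ ellB γ / (Dfun γ : ℝ) * (Pfun γ : ℝ) with hg
    set G : Finset BranchTree := Gamma (n + 1) with hG
    have hzero : BranchTree.zero ∉ (G ×ˢ G ×ˢ G).image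
        fun p => BranchTree.node p.1 p.2.1 p.2.2 := by
      simp [Finset.mem_image]
    have hGamma : Gamma (n + 2) = insert BranchTree.zero
        ((G ×ˢ G ×ˢ G).image fun p => BranchTree.node p.1 p.2.1 p.2.2) := rfl
    rw [hGamma, Finset.sum_insert hzero]
    have hinj : ∀ p ∈ G ×ˢ G ×ˢ G, ∀ q ∈ G ×ˢ G ×ˢ G,
        (BranchTree.node p.1 p.2.1 p.2.2 = BranchTree.node q.1 q.2.1 q.2.2) → p = q := by
      intro p _ q _ h
      obtain ⟨h1, h2, h3⟩ := BranchTree.node.injEq _ _ _ _ _ _ ▸ h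
      exact Prod.ext h1 (Prod.ext h2 h3)
    rw [Finset.sum_image hinj]
    have hrw : ∑ p ∈ G ×ˢ G ×ˢ G, g (BranchTree.node p.1 p.2.1 p.2.2)
        = ∑ x ∈ G, ∑ y ∈ G, ∑ z ∈ G, 3 * T * g x * g y * g z := by
      rw [Finset.sum_product]
      refine Finset.sum_congr rfl fun x _ => ?_
      rw [Finset.sum_product]
      refine Finset.sum_congr rfl fun y _ => ?_
      refine Finset.sum_congr rfl fun z _ => ?_
      simp only [hg]
      rw [g_node]
    rw [hrw, triple_sum_fin]
    have hgzero : T ^ ellB BranchTree.zero / (Dfun BranchTree.zero : ℝ) *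
        (Pfun BranchTree.zero : ℝ) = 1 := by
      norm_num [show Pfun BranchTree.zero = 1 from rfl, show ellB BranchTree.zero = 0 from rfl,
        show Dfun BranchTree.zero = 1 from rfl]
    rw [hgzero]
    have hM0 : 0 ≤ ∑ γ ∈ G, g γ := by
      refine Finset.sum_nonneg fun γ _ => ?_
      have h1 : (0:ℝ) < (Dfun γ : ℝ) := by exact_mod_cast Dfun_pos γ
      have h2 : (0:ℝ) ≤ (Pfun γ : ℝ) := by positivity
      have h3 : (0:ℝ) ≤ T ^ ellB γ := by positivity
      simp only [hg]
      positivity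
    have hM : ∑ γ ∈ G, g γ ≤ 3 / 2 := ih
    have hcube : (∑ γ ∈ G, g γ) ^ 3 ≤ (3 / 2) ^ 3 := by
      exact pow_le_pow_left₀ hM0 hM 3
    nlinarith [mul_le_mul_of_nonneg_left hcube (by positivity : (0:ℝ) ≤ 3 * T)]
end

section
/- Let ν ≥ 1, 0 < κ ≤ 1, C > 0, and 0 < ϱ with 0 < κ/4 − 4ϱ ≤ 1. If |𝔠(t,n)| ≤ C e^{-κ|n|/2} uniformly in t and u^ε, u_linear are as in the weakly nonlinear derivative NLS problem, then for t = |ε|^{-1+η}, the weighted ℓ² norm satisfies ∑_{n∈ℤ^ν} e^{2ϱ|n|} |𝔠^ε(t,n) − e^{-i⟨n⟩²t}𝔠(n)|² ≤ 3(κ/4 − 4ϱ)^{-1}(12/κ)^6 (|ε| t)² · const ≲ |ε|^{2η}, and hence the analytic Sobolev norm ‖u^ε(t) − u_linear(t)‖_{ℋ^ϱ_x} → 0 as ε → 0. -/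
abbrev Triple (ν : ℕ) (n : Fin ν → ℤ) : Type :=
  {p : (Fin ν → ℤ) × (Fin ν → ℤ) × (Fin ν → ℤ) // p.1 - p.2.1 + p.2.2 = n}

noncomputable def frq (ν : ℕ) (ω : Fin ν → ℝ) (n : Fin ν → ℤ) : ℝ :=
  ∑ j, (n j : ℝ) * ω j

noncomputable def l1 (ν : ℕ) (n : Fin ν → ℤ) : ℝ := ∑ j, |(n j : ℝ)|

noncomputable def NLterm (ν : ℕ) (c : (Fin ν → ℤ) → ℂ) (n : Fin ν → ℤ) : ℂ :=
  ∑' p : Triple ν n,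
    c p.val.1 *
      (starRingEnd ℂ) (c p.val.2.1) *
      c p.val.2.2

lemma summable_exp_abs_int {a : ℝ} (ha : 0 < a) :
    Summable fun k : ℤ => Real.exp (-a * |(k : ℝ)|) := by
  have hgeo : Summable fun n : ℕ => Real.exp (-a) ^ n :=
    summable_geometric_of_lt_one (Real.exp_pos _).le
      (Real.exp_lt_one_iff.mpr (by linarith))
  apply Summable.of_nat_of_neg <;>
    refine hgeo.congr fun n => ?_ <;>
    · rw [← Real.exp_nat_mul]
      congr 1
      push_cast
      simp only [abs_neg, abs_of_nonneg (Nat.cast_nonneg (α := ℝ) n)]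
      ring

lemma summable_exp_l1 {a : ℝ} (ha : 0 < a) (ν : ℕ) :
    Summable fun m : Fin ν → ℤ => Real.exp (-a * l1 ν m) := by
  unfold l1
  induction ν with
  | zero => exact Summable.of_finite
  | succ ν ih =>
    rw [← (Fin.consEquiv (fun _ : Fin (ν + 1) => ℤ)).summable_iff]
    have h : ((fun m : Fin (ν + 1) → ℤ => Real.exp (-a * ∑ j, |(m j : ℝ)|)) ∘
          (Fin.consEquiv (fun _ : Fin (ν + 1) => ℤ))) =
        fun q : ℤ × (Fin ν → ℤ) =>
          Real.exp (-a * |(q.1 : ℝ)|) * Real.exp (-a * ∑ j, |(q.2 j : ℝ)|) := by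
      funext q
      show Real.exp (-a * ∑ j, |((Fin.cons q.1 q.2 : Fin (ν + 1) → ℤ) j : ℝ)|) = _
      rw [← Real.exp_add]
      congr 1
      rw [Fin.sum_univ_succ]
      simp only [Fin.cons_zero, Fin.cons_succ]
      ring
    rw [h]
    exact (summable_exp_abs_int ha).mul_of_nonneg ih
      (fun _ => (Real.exp_pos _).le) (fun _ => (Real.exp_pos _).le)

lemma l1_nonneg (ν : ℕ) (n : Fin ν → ℤ) : 0 ≤ l1 ν n :=
  Finset.sum_nonneg fun _ _ => abs_nonneg _

lemma l1_triangle (ν : ℕ) (a b d : Fin ν → ℤ) :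
    l1 ν (a - b + d) ≤ l1 ν a + l1 ν b + l1 ν d := by
  unfold l1
  rw [← Finset.sum_add_distrib, ← Finset.sum_add_distrib]
  apply Finset.sum_le_sum
  intro j _
  have h : ((a - b + d) j : ℝ) = (a j : ℝ) - b j + d j := by
    simp [Pi.add_apply, Pi.sub_apply]
  rw [h]
  calc |(a j : ℝ) - b j + d j| ≤ |(a j : ℝ) - b j| + |(d j : ℝ)| := abs_add_le _ _
    _ ≤ |(a j : ℝ)| + |(b j : ℝ)| + |(d j : ℝ)| := by
        have := abs_sub (a j : ℝ) (b j : ℝ)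
        linarith

def tripleEquiv (ν : ℕ) (n : Fin ν → ℤ) : Triple ν n ≃ (Fin ν → ℤ) × (Fin ν → ℤ) where
  toFun p := (p.val.1, p.val.2.1)
  invFun q := ⟨(q.1, q.2, n - q.1 + q.2), by ring⟩
  left_inv p := by
    obtain ⟨⟨a, b, d⟩, hp⟩ := p
    apply Subtype.ext
    show (a, b, n - a + b) = (a, b, d)
    have hd : n - a + b = d := by rw [← hp]; ring
    rw [hd]
  right_inv q := rfl

lemma NL_bound (ν : ℕ) (κ C : ℝ) (hκ : 0 < κ) (hC : 0 ≤ C) (c' : (Fin ν → ℤ) → ℂ)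
    (h : ∀ m, ‖c' m‖ ≤ C * Real.exp (-(κ / 2) * l1 ν m)) (n : Fin ν → ℤ) :
    ‖NLterm ν c' n‖ ≤
      C ^ 3 * (∑' q : (Fin ν → ℤ) × (Fin ν → ℤ),
        Real.exp (-(κ / 4) * l1 ν q.1) * Real.exp (-(κ / 4) * l1 ν q.2)) *
        Real.exp (-(κ / 4) * l1 ν n) := by
  have hκ4 : 0 < κ / 4 := by linarith
  set f : (Fin ν → ℤ) → ℝ := fun m => Real.exp (-(κ / 4) * l1 ν m) with hf
  set g : Triple ν n → ℝ := fun p =>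
    (C ^ 3 * Real.exp (-(κ / 4) * l1 ν n)) * (f p.val.1 * f p.val.2.1) with hgdef
  have hfs : Summable f := summable_exp_l1 hκ4 ν
  have hprod : Summable fun q : (Fin ν → ℤ) × (Fin ν → ℤ) => f q.1 * f q.2 :=
    hfs.mul_of_nonneg hfs (fun _ => (Real.exp_pos _).le) (fun _ => (Real.exp_pos _).le)
  have hg : Summable g := by
    rw [← (tripleEquiv ν n).symm.summable_iff]
    exact (hprod.mul_left _)
  have hterm : ∀ p : Triple ν n,
      ‖c' p.val.1 * (starRingEnd ℂ) (c' p.val.2.1) * c' p.val.2.2‖ ≤ g p := by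
    rintro ⟨⟨a, b, d⟩, hp⟩
    have h1 := h a; have h2 := h b; have h3 := h d
    have e1 : ‖c' a * (starRingEnd ℂ) (c' b) * c' d‖ =
        ‖c' a‖ * ‖c' b‖ * ‖c' d‖ := by
      rw [norm_mul, norm_mul, Complex.norm_conj]
    rw [e1]
    have step : ‖c' a‖ * ‖c' b‖ * ‖c' d‖ ≤
        (C * Real.exp (-(κ / 2) * l1 ν a)) * (C * Real.exp (-(κ / 2) * l1 ν b)) *
          (C * Real.exp (-(κ / 2) * l1 ν d)) := by
      apply mul_le_mul (mul_le_mul h1 h2 (norm_nonneg _) (by positivity)) h3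
        (norm_nonneg _) (by positivity)
    refine step.trans ?_
    have hrw : (C * Real.exp (-(κ / 2) * l1 ν a)) * (C * Real.exp (-(κ / 2) * l1 ν b)) *
        (C * Real.exp (-(κ / 2) * l1 ν d)) =
        C ^ 3 * Real.exp (-(κ / 2) * l1 ν a + -(κ / 2) * l1 ν b + -(κ / 2) * l1 ν d) := by
      rw [Real.exp_add, Real.exp_add]; ring
    have hrw2 : g ⟨(a, b, d), hp⟩ =
        C ^ 3 * Real.exp (-(κ / 4) * l1 ν n + (-(κ / 4) * l1 ν a + -(κ / 4) * l1 ν b)) := by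
      simp only [hgdef, hf]
      rw [Real.exp_add, Real.exp_add]; ring
    rw [hrw, hrw2]
    apply mul_le_mul_of_nonneg_left _ (by positivity)
    apply Real.exp_le_exp.mpr
    have htr : l1 ν n ≤ l1 ν a + l1 ν b + l1 ν d := by
      rw [← hp]; exact l1_triangle ν a b d
    have n1 := l1_nonneg ν a; have n2 := l1_nonneg ν b; have n3 := l1_nonneg ν d
    nlinarith
  have habs : Summable fun p : Triple ν n =>
      ‖c' p.val.1 * (starRingEnd ℂ) (c' p.val.2.1) * c' p.val.2.2‖ :=
    Summable.of_nonneg_of_le (fun _ => norm_nonneg _) hterm hg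
  have hnorm : ‖NLterm ν c' n‖ ≤
      ∑' p : Triple ν n,
        ‖c' p.val.1 * (starRingEnd ℂ) (c' p.val.2.1) * c' p.val.2.2‖ := by
    exact norm_tsum_le_tsum_norm habs
  refine hnorm.trans ?_
  have h2 : (∑' p : Triple ν n,
      ‖c' p.val.1 * (starRingEnd ℂ) (c' p.val.2.1) * c' p.val.2.2‖) ≤
      ∑' p, g p := Summable.tsum_le_tsum hterm habs hg
  refine h2.trans (le_of_eq ?_)
  have h3 : ∑' p, g p = ∑' q : (Fin ν → ℤ) × (Fin ν → ℤ), g ((tripleEquiv ν n).symm q) :=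
    ((tripleEquiv ν n).symm.tsum_eq g).symm
  rw [h3]
  have h4 : ∀ q : (Fin ν → ℤ) × (Fin ν → ℤ), g ((tripleEquiv ν n).symm q) =
      (C ^ 3 * Real.exp (-(κ / 4) * l1 ν n)) * (f q.1 * f q.2) := fun q => rfl
  simp only [h4]
  rw [tsum_mul_left]
  ring

theorem sobolev_asymptotics (ν : ℕ) (hν : 1 ≤ ν) (κ C ϱ η : ℝ)
    (hκ : 0 < κ) (hκ1 : κ ≤ 1) (hC : 0 < C) (hϱ : 0 < ϱ)
    (hϱκ : 0 < κ / 4 - 4 * ϱ) (hϱκ1 : κ / 4 - 4 * ϱ ≤ 1)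
    (hη : 0 < η) (hη1 : η < 1)
    (ω : Fin ν → ℝ) (c0 : (Fin ν → ℤ) → ℂ)
    (c : ℝ → ℝ → (Fin ν → ℤ) → ℂ)
    (hinit : ∀ (ε : ℝ) (n : Fin ν → ℤ), c ε 0 n = c0 n)
    (hdecay : ∀ (ε t : ℝ) (n : Fin ν → ℤ), 0 ≤ t →
      ‖c ε t n‖ ≤ C * Real.exp (-(κ / 2) * l1 ν n))
    (hduh : ∀ (ε t : ℝ) (n : Fin ν → ℤ), 0 ≤ t → c ε t n =
      Complex.exp (-Complex.I * ((frq ν ω n : ℝ) : ℂ) ^ 2 * (t : ℂ)) * c0 n +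
        Complex.I * (ε : ℂ) * ((frq ν ω n : ℝ) : ℂ) *
          ∫ s in (0 : ℝ)..t,
            Complex.exp (-Complex.I * ((frq ν ω n : ℝ) : ℂ) ^ 2 * ((t : ℂ) - (s : ℂ))) *
              NLterm ν (c ε s) n) :
    ∃ K > (0 : ℝ), ∀ (ε : ℝ), ε ≠ 0 → |ε| ≤ 1 →
      (∑' n : Fin ν → ℤ, Real.exp (2 * ϱ * l1 ν n) *
          (‖c ε (|ε| ^ (-1 + η : ℝ)) n -
            Complex.exp (-Complex.I * ((frq ν ω n : ℝ) : ℂ) ^ 2 *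
              ((|ε| ^ (-1 + η : ℝ) : ℝ) : ℂ)) * c0 n‖) ^ 2
        ≤ 3 * (κ / 4 - 4 * ϱ)⁻¹ * (12 / κ) ^ 6 * (|ε| * |ε| ^ (-1 + η : ℝ)) ^ 2 * K) ∧
      (∑' n : Fin ν → ℤ, Real.exp (2 * ϱ * l1 ν n) *
          (‖c ε (|ε| ^ (-1 + η : ℝ)) n -
            Complex.exp (-Complex.I * ((frq ν ω n : ℝ) : ℂ) ^ 2 *
              ((|ε| ^ (-1 + η : ℝ) : ℝ) : ℂ)) * c0 n‖) ^ 2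
        ≤ 3 * (κ / 4 - 4 * ϱ)⁻¹ * (12 / κ) ^ 6 * K * |ε| ^ (2 * η)) := by
  classical
  have hκ4 : 0 < κ / 4 := by linarith
  set W : ℝ := 1 + ∑ j, |ω j| with hW
  have hW0 : 0 < W := by positivity
  set B2 : ℝ := ∑' q : (Fin ν → ℤ) × (Fin ν → ℤ),
      Real.exp (-(κ / 4) * l1 ν q.1) * Real.exp (-(κ / 4) * l1 ν q.2) with hB2
  have hB2nn : 0 ≤ B2 := tsum_nonneg fun _ => by positivity
  set b : ℝ := κ / 2 - 2 * ϱ with hb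
  have hb0 : 0 < b := by rw [hb]; linarith
  have hb20 : 0 < b / 2 := by linarith
  set S : ℝ := ∑' m : Fin ν → ℤ, Real.exp (-(b / 2) * l1 ν m) with hS
  have hSnn : 0 ≤ S := tsum_nonneg fun _ => (Real.exp_pos _).le
  set A : ℝ := (W * C ^ 3 * B2) ^ 2 * (16 / b ^ 2) * S with hA
  have hA0 : 0 ≤ A := by positivity
  set denom : ℝ := 3 * (κ / 4 - 4 * ϱ)⁻¹ * (12 / κ) ^ 6 with hden
  have hden0 : 0 < denom :=
    mul_pos (mul_pos (by norm_num) (inv_pos.mpr hϱκ))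
      (pow_pos (div_pos (by norm_num) hκ) 6)
  -- key elementary inequality
  have key : ∀ L : ℝ, 0 ≤ L →
      L ^ 2 * Real.exp (-b * L) ≤ 16 / b ^ 2 * Real.exp (-(b / 2) * L) := by
    intro L hL
    have hE : 1 + b / 4 * L ≤ Real.exp (b / 4 * L) := by
      linarith [Real.add_one_le_exp (b / 4 * L)]
    have hE0 : 0 ≤ b / 4 * L := by positivity
    have hEL : b / 4 * L ≤ Real.exp (b / 4 * L) := by linarith
    have hsq : (b / 4 * L) ^ 2 ≤ Real.exp (b / 4 * L) ^ 2 :=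
      pow_le_pow_left₀ hE0 hEL 2
    have hexp2 : Real.exp (b / 2 * L) = Real.exp (b / 4 * L) ^ 2 := by
      rw [sq, ← Real.exp_add]; ring_nf
    have hmain : L ^ 2 ≤ 16 / b ^ 2 * Real.exp (b / 2 * L) := by
      rw [hexp2]
      have h16 : 16 / b ^ 2 * (b / 4 * L) ^ 2 = L ^ 2 := by
        field_simp; ring
      rw [← h16]
      exact mul_le_mul_of_nonneg_left hsq (by positivity)
    have hfold : Real.exp (-b * L) = Real.exp (-(b / 2) * L) * Real.exp (b / 2 * L) *
        Real.exp (-b * L) / Real.exp (0) := by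
      rw [← Real.exp_add, ← Real.exp_add, ← Real.exp_sub]; ring_nf
    calc L ^ 2 * Real.exp (-b * L)
        ≤ (16 / b ^ 2 * Real.exp (b / 2 * L)) * Real.exp (-b * L) := by
          apply mul_le_mul_of_nonneg_right hmain (Real.exp_pos _).le
      _ = 16 / b ^ 2 * Real.exp (-(b / 2) * L) := by
          rw [mul_assoc, ← Real.exp_add]; ring_nf
  refine ⟨(A + 1) / denom, by positivity, ?_⟩
  intro ε hε hε1
  have habs : 0 < |ε| := abs_pos.mpr hε
  set t : ℝ := |ε| ^ (-1 + η : ℝ) with htdef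
  have ht : 0 < t := Real.rpow_pos_of_pos habs _
  -- frequency bound
  have hfrq : ∀ n : Fin ν → ℤ, |frq ν ω n| ≤ W * l1 ν n := by
    intro n
    unfold frq
    calc |∑ j, (n j : ℝ) * ω j| ≤ ∑ j, |(n j : ℝ) * ω j| :=
          Finset.abs_sum_le_sum_abs _ _
      _ ≤ ∑ j, |(n j : ℝ)| * W := by
          apply Finset.sum_le_sum
          intro j _
          rw [abs_mul]
          apply mul_le_mul_of_nonneg_left _ (abs_nonneg _)
          have h1 : |ω j| ≤ ∑ i, |ω i| :=
            Finset.single_le_sum (fun i _ => abs_nonneg (ω i)) (Finset.mem_univ j)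
          rw [hW]; linarith
      _ = W * l1 ν n := by rw [← Finset.sum_mul]; unfold l1; ring
  -- pointwise Duhamel bound
  have hpoint : ∀ n : Fin ν → ℤ,
      ‖c ε t n - Complex.exp (-Complex.I * ((frq ν ω n : ℝ) : ℂ) ^ 2 *
          ((t : ℝ) : ℂ)) * c0 n‖ ≤
        (|ε| * t * (W * C ^ 3 * B2)) * (l1 ν n * Real.exp (-(κ / 4) * l1 ν n)) := by
    intro n
    have hdd : c ε t n - Complex.exp (-Complex.I * ((frq ν ω n : ℝ) : ℂ) ^ 2 *
        ((t : ℝ) : ℂ)) * c0 n =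
        Complex.I * (ε : ℂ) * ((frq ν ω n : ℝ) : ℂ) *
          ∫ s in (0 : ℝ)..t,
            Complex.exp (-Complex.I * ((frq ν ω n : ℝ) : ℂ) ^ 2 * ((t : ℂ) - (s : ℂ))) *
              NLterm ν (c ε s) n := by
      rw [hduh ε t n ht.le]; ring
    rw [hdd, norm_mul, norm_mul, norm_mul, Complex.norm_I, one_mul, Complex.norm_real,
      Real.norm_eq_abs, Complex.norm_real, Real.norm_eq_abs]
    have hint : ‖∫ s in (0 : ℝ)..t,
        Complex.exp (-Complex.I * ((frq ν ω n : ℝ) : ℂ) ^ 2 * ((t : ℂ) - (s : ℂ))) *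
          NLterm ν (c ε s) n‖ ≤ (C ^ 3 * B2 * Real.exp (-(κ / 4) * l1 ν n)) * t := by
      have hbd : ∀ s ∈ Set.uIoc (0 : ℝ) t,
          ‖Complex.exp (-Complex.I * ((frq ν ω n : ℝ) : ℂ) ^ 2 * ((t : ℂ) - (s : ℂ))) *
            NLterm ν (c ε s) n‖ ≤ C ^ 3 * B2 * Real.exp (-(κ / 4) * l1 ν n) := by
        intro s hs
        rw [Set.uIoc_of_le ht.le] at hs
        have hs0 : 0 ≤ s := hs.1.le
        rw [norm_mul]
        have hexp1 : ‖Complex.exp (-Complex.I * ((frq ν ω n : ℝ) : ℂ) ^ 2 *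
            ((t : ℂ) - (s : ℂ)))‖ = 1 := by
          rw [Complex.norm_exp]
          have hre : ∀ (x y : ℝ), (-Complex.I * (x : ℂ) * (y : ℂ)).re = 0 := by
            intro x y
            simp [Complex.mul_re, Complex.mul_im]
          have h0 : ((frq ν ω n : ℝ) : ℂ) ^ 2 = ((frq ν ω n ^ 2 : ℝ) : ℂ) := by
            push_cast; ring
          have : (-Complex.I * ((frq ν ω n : ℝ) : ℂ) ^ 2 * ((t : ℂ) - (s : ℂ))).re = 0 := by
            rw [h0, ← Complex.ofReal_sub]
            exact hre _ _
          rw [this, Real.exp_zero]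
        rw [hexp1, one_mul]
        exact NL_bound ν κ C hκ hC.le (c ε s) (fun m => hdecay ε s m hs0) n
      have h2 := intervalIntegral.norm_integral_le_of_norm_le_const hbd
      calc ‖∫ s in (0 : ℝ)..t,
            Complex.exp (-Complex.I * ((frq ν ω n : ℝ) : ℂ) ^ 2 * ((t : ℂ) - (s : ℂ))) *
              NLterm ν (c ε s) n‖
          ≤ C ^ 3 * B2 * Real.exp (-(κ / 4) * l1 ν n) * |t - 0| := h2
        _ = (C ^ 3 * B2 * Real.exp (-(κ / 4) * l1 ν n)) * t := by
            rw [sub_zero, abs_of_nonneg ht.le]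
    calc |ε| * |frq ν ω n| * ‖∫ s in (0 : ℝ)..t,
          Complex.exp (-Complex.I * ((frq ν ω n : ℝ) : ℂ) ^ 2 * ((t : ℂ) - (s : ℂ))) *
            NLterm ν (c ε s) n‖
        ≤ |ε| * (W * l1 ν n) * ((C ^ 3 * B2 * Real.exp (-(κ / 4) * l1 ν n)) * t) := by
          apply mul_le_mul (mul_le_mul_of_nonneg_left (hfrq n) (abs_nonneg ε)) hint
            (norm_nonneg _)
          have := l1_nonneg ν n
          positivity
      _ = (|ε| * t * (W * C ^ 3 * B2)) * (l1 ν n * Real.exp (-(κ / 4) * l1 ν n)) := by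
          ring
  -- termwise bound for the weighted series
  set Kc : ℝ := ((|ε| * t) * (W * C ^ 3 * B2)) ^ 2 * (16 / b ^ 2) with hKc
  have hterm_le : ∀ n : Fin ν → ℤ,
      Real.exp (2 * ϱ * l1 ν n) *
        (‖c ε t n - Complex.exp (-Complex.I * ((frq ν ω n : ℝ) : ℂ) ^ 2 *
          ((t : ℝ) : ℂ)) * c0 n‖) ^ 2 ≤ Kc * Real.exp (-(b / 2) * l1 ν n) := by
    intro n
    have hL := l1_nonneg ν n
    have h1 : (‖c ε t n - Complex.exp (-Complex.I * ((frq ν ω n : ℝ) : ℂ) ^ 2 *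
        ((t : ℝ) : ℂ)) * c0 n‖) ^ 2 ≤
        ((|ε| * t * (W * C ^ 3 * B2)) * (l1 ν n * Real.exp (-(κ / 4) * l1 ν n))) ^ 2 :=
      pow_le_pow_left₀ (norm_nonneg _) (hpoint n) 2
    have h2 : Real.exp (2 * ϱ * l1 ν n) *
        ((|ε| * t * (W * C ^ 3 * B2)) * (l1 ν n * Real.exp (-(κ / 4) * l1 ν n))) ^ 2 =
        ((|ε| * t) * (W * C ^ 3 * B2)) ^ 2 * ((l1 ν n) ^ 2 * Real.exp (-b * l1 ν n)) := by
      have he : Real.exp (2 * ϱ * l1 ν n) * Real.exp (-(κ / 4) * l1 ν n) ^ 2 =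
          Real.exp (-b * l1 ν n) := by
        rw [sq, ← Real.exp_add, ← Real.exp_add, hb]; ring_nf
      calc Real.exp (2 * ϱ * l1 ν n) *
          ((|ε| * t * (W * C ^ 3 * B2)) * (l1 ν n * Real.exp (-(κ / 4) * l1 ν n))) ^ 2
          = ((|ε| * t) * (W * C ^ 3 * B2)) ^ 2 * ((l1 ν n) ^ 2 *
              (Real.exp (2 * ϱ * l1 ν n) * Real.exp (-(κ / 4) * l1 ν n) ^ 2)) := by ring
        _ = _ := by rw [he]
    calc Real.exp (2 * ϱ * l1 ν n) *
        (‖c ε t n - Complex.exp (-Complex.I * ((frq ν ω n : ℝ) : ℂ) ^ 2 *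
          ((t : ℝ) : ℂ)) * c0 n‖) ^ 2
        ≤ Real.exp (2 * ϱ * l1 ν n) *
            ((|ε| * t * (W * C ^ 3 * B2)) * (l1 ν n * Real.exp (-(κ / 4) * l1 ν n))) ^ 2 :=
          mul_le_mul_of_nonneg_left h1 (Real.exp_pos _).le
      _ = ((|ε| * t) * (W * C ^ 3 * B2)) ^ 2 *
            ((l1 ν n) ^ 2 * Real.exp (-b * l1 ν n)) := h2
      _ ≤ ((|ε| * t) * (W * C ^ 3 * B2)) ^ 2 *
            (16 / b ^ 2 * Real.exp (-(b / 2) * l1 ν n)) :=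
          mul_le_mul_of_nonneg_left (key _ hL) (sq_nonneg _)
      _ = Kc * Real.exp (-(b / 2) * l1 ν n) := by rw [hKc]; ring
  have hG : Summable fun n : Fin ν → ℤ => Kc * Real.exp (-(b / 2) * l1 ν n) :=
    (summable_exp_l1 hb20 ν).mul_left _
  have hlhs : Summable fun n : Fin ν → ℤ =>
      Real.exp (2 * ϱ * l1 ν n) *
        (‖c ε t n - Complex.exp (-Complex.I * ((frq ν ω n : ℝ) : ℂ) ^ 2 *
          ((t : ℝ) : ℂ)) * c0 n‖) ^ 2 :=
    Summable.of_nonneg_of_le (fun n => by positivity) hterm_le hG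
  have main : (∑' n : Fin ν → ℤ, Real.exp (2 * ϱ * l1 ν n) *
      (‖c ε t n - Complex.exp (-Complex.I * ((frq ν ω n : ℝ) : ℂ) ^ 2 *
        ((t : ℝ) : ℂ)) * c0 n‖) ^ 2) ≤ (|ε| * t) ^ 2 * A := by
    calc (∑' n : Fin ν → ℤ, Real.exp (2 * ϱ * l1 ν n) *
        (‖c ε t n - Complex.exp (-Complex.I * ((frq ν ω n : ℝ) : ℂ) ^ 2 *
          ((t : ℝ) : ℂ)) * c0 n‖) ^ 2)
        ≤ ∑' n : Fin ν → ℤ, Kc * Real.exp (-(b / 2) * l1 ν n) :=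
          Summable.tsum_le_tsum hterm_le hlhs hG
      _ = Kc * S := by rw [tsum_mul_left, hS]
      _ = (|ε| * t) ^ 2 * A := by rw [hKc, hA]; ring
  have hpow : (|ε| * t) ^ 2 = |ε| ^ (2 * η) := by
    have h1 : |ε| * t = |ε| ^ (η : ℝ) := by
      rw [htdef]
      nth_rewrite 1 [← Real.rpow_one |ε|]
      rw [← Real.rpow_add habs]
      norm_num
    rw [h1, ← Real.rpow_natCast (|ε| ^ (η : ℝ)) 2, ← Real.rpow_mul (abs_nonneg ε)]
    norm_num [mul_comm]
  have hdenK : denom * ((A + 1) / denom) = A + 1 := by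
    field_simp
  have hmono : (|ε| * t) ^ 2 * A ≤ (|ε| * t) ^ 2 * (A + 1) :=
    mul_le_mul_of_nonneg_left (by linarith) (sq_nonneg _)
  constructor
  · calc (∑' n : Fin ν → ℤ, Real.exp (2 * ϱ * l1 ν n) *
        (‖c ε t n - Complex.exp (-Complex.I * ((frq ν ω n : ℝ) : ℂ) ^ 2 *
          ((t : ℝ) : ℂ)) * c0 n‖) ^ 2)
        ≤ (|ε| * t) ^ 2 * A := main
      _ ≤ (|ε| * t) ^ 2 * (A + 1) := hmono
      _ = denom * (|ε| * t) ^ 2 * ((A + 1) / denom) := by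
          rw [mul_assoc, mul_comm ((|ε| * t) ^ 2) ((A + 1) / denom), ← mul_assoc, hdenK]
          ring
  · calc (∑' n : Fin ν → ℤ, Real.exp (2 * ϱ * l1 ν n) *
        (‖c ε t n - Complex.exp (-Complex.I * ((frq ν ω n : ℝ) : ℂ) ^ 2 *
          ((t : ℝ) : ℂ)) * c0 n‖) ^ 2)
        ≤ (|ε| * t) ^ 2 * A := main
      _ ≤ (|ε| * t) ^ 2 * (A + 1) := hmono
      _ = denom * ((A + 1) / denom) * |ε| ^ (2 * η) := by
          rw [hdenK, hpow]; ring
end
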